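/- Let U ⊆ ℝⁿ be open and assume the bounded function u ∈ Lip_loc(U) satisfies the pointwise convexity criterion in U. Suppose x, y ∈ U and 0 < t < δ(x) (where δ(x) is as in the pointwise convexity criterion) are such that T^t u(x) = u(y) − t L((y − x)/t). Then (T^t u(x) − u(x))/t ≤ S⁺u(y). -/

import Mathlib

open Set Metric MeasureTheory Filter Bornology
open scoped RealInnerProductSpace

noncomputable section

abbrev Euc (n : ℕ) := EuclideanSpace ℝ (Fin n)

variable {n : ℕ}

/-- The Lagrangian of `H`, an extended real number. -/
def Lag (H : Euc n → ℝ) (q : Euc n) : EReal :=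
  ⨆ p : Euc n, ((⟪p, q⟫ - H p : ℝ) : EReal)

/-- `T^t u (x)`, with supremum taken over `y ∈ S`. Points `y` where the Lagrangian term
is `+∞` contribute nothing, since no real number equals `-∞`. -/
def TupOn (H : Euc n → ℝ) (S : Set (Euc n)) (u : Euc n → ℝ) (t : ℝ) (x : Euc n) : ℝ :=
  if t = 0 then u x
  else sSup {r : ℝ | ∃ y ∈ S, (r : EReal) = (u y : EReal) - (t : EReal) * Lag H (t⁻¹ • (y - x))}

/-- `T_t u (x)`, with infimum taken over `y ∈ S`. -/
def TdnOn (H : Euc n → ℝ) (S : Set (Euc n)) (u : Euc n → ℝ) (t : ℝ) (x : Euc n) : ℝ :=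
  if t = 0 then u x
  else sInf {r : ℝ | ∃ y ∈ S, (r : EReal) = (u y : EReal) + (t : EReal) * Lag H (t⁻¹ • (x - y))}

/-- `S⁺ u (x) = limsup_{t ↓ 0} (T^t u(x) - u(x))/t`. -/
def Splus (H : Euc n → ℝ) (U : Set (Euc n)) (u : Euc n → ℝ) (x : Euc n) : ℝ :=
  limsup (fun t => (TupOn H U u t x - u x) / t) (nhdsWithin 0 (Ioi 0))

/-- The oscillation `osc_U u = sup_U u - inf_U u`. -/
def oscOn (u : Euc n → ℝ) (U : Set (Euc n)) : ℝ := sSup (u '' U) - sInf (u '' U)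

/-- `U_r = {x ∈ U : dist(x, ∂U) > r}`. -/
def inUr (U : Set (Euc n)) (r : ℝ) : Set (Euc n) := {x ∈ U | r < infDist x (frontier U)}

/-- The cone function `C_k(x) = max {p·x : H(p) = k}`. -/
def coneFn (H : Euc n → ℝ) (k : ℝ) (x : Euc n) : ℝ :=
  sSup {r : ℝ | ∃ p, H p = k ∧ r = ⟪p, x⟫}

/-- The subdifferential of `H` at `p`. -/
def subdiff (H : Euc n → ℝ) (p : Euc n) : Set (Euc n) :=
  {q | ∀ p', H p + ⟪q, p' - p⟫ ≤ H p'}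

/-- `Γ_k`: subgradients of `H` at points of the level set `H⁻¹(k)`. -/
def GammaSet (H : Euc n → ℝ) (k : ℝ) : Set (Euc n) :=
  {q | ∃ p, H p = k ∧ q ∈ subdiff H p}

/-- `W_k`: subgradients of `H` at points of the sublevel set `H⁻¹([0,k])`. -/
def WSet (H : Euc n → ℝ) (k : ℝ) : Set (Euc n) :=
  {q | ∃ p, 0 ≤ H p ∧ H p ≤ k ∧ q ∈ subdiff H p}

/-- `u ∈ Lip_loc(U)`: `u` is locally Lipschitz on `U`. -/
def LocLipOn (u : Euc n → ℝ) (U : Set (Euc n)) : Prop :=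
  ∀ x ∈ U, ∃ K : NNReal, ∃ s ∈ nhdsWithin x U, LipschitzOnWith K u s

/-- `ess sup_V H(Dv)`, defined to be `+∞` if `v` is not locally Lipschitz in `V`.
Here `Dv` is the a.e.-defined gradient (Rademacher). -/
def essSupH (H : Euc n → ℝ) (V : Set (Euc n)) (v : Euc n → ℝ) : EReal :=
  haveI := Classical.propDecidable (LocLipOn v V)
  if LocLipOn v V then
    essSup (fun x => ((H (gradient v x) : ℝ) : EReal)) (volume.restrict V)
  else ⊤

/-- `u` is absolutely subminimizing for `H` in `U`. -/
def AbsSubmin (H : Euc n → ℝ) (U : Set (Euc n)) (u : Euc n → ℝ) : Prop :=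
  LocLipOn u U ∧
  ∀ V : Set (Euc n), IsOpen V → IsCompact (closure V) → closure V ⊆ U →
    ∀ v : Euc n → ℝ, LocLipOn v V → ContinuousOn v (closure V) →
      EqOn v u (frontier V) → (∀ x ∈ V, v x ≤ u x) →
        essSupH H V u ≤ essSupH H V v

/-- `u` is absolutely superminimizing for `H` in `U`. -/
def AbsSupermin (H : Euc n → ℝ) (U : Set (Euc n)) (u : Euc n → ℝ) : Prop :=
  LocLipOn u U ∧
  ∀ V : Set (Euc n), IsOpen V → IsCompact (closure V) → closure V ⊆ U →
    ∀ v : Euc n → ℝ, LocLipOn v V → ContinuousOn v (closure V) →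
      EqOn v u (frontier V) → (∀ x ∈ V, u x ≤ v x) →
        essSupH H V u ≤ essSupH H V v

/-- `u` satisfies comparisons with cones from above in `U`. -/
def CmpConesAbove (H : Euc n → ℝ) (U : Set (Euc n)) (u : Euc n → ℝ) : Prop :=
  ∀ k : ℝ, 0 ≤ k → ∀ V : Set (Euc n), IsOpen V → IsCompact (closure V) → closure V ⊆ U →
    ∀ x₀, x₀ ∉ V →
      sSup ((fun x => u x - coneFn H k (x - x₀)) '' closure V) =
      sSup ((fun x => u x - coneFn H k (x - x₀)) '' frontier V)

/-- `u` satisfies the convexity criterion in `U`. -/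
def ConvexityCriterion (H : Euc n → ℝ) (U : Set (Euc n)) (u : Euc n → ℝ) : Prop :=
  ∀ V : Set (Euc n), IsOpen V → IsCompact (closure V) → closure V ⊆ U →
    ∃ δ > (0:ℝ), ∀ x ∈ V, ConvexOn ℝ (Icc 0 δ) (fun t => TupOn H U u t x)

/-- `u` satisfies the pointwise convexity criterion in `U`. -/
def PtwiseCC (H : Euc n → ℝ) (U : Set (Euc n)) (u : Euc n → ℝ) : Prop :=
  UpperSemicontinuousOn (Splus H U u) U ∧
  ∀ x ∈ U, ∃ δ > (0:ℝ), ConvexOn ℝ (Icc 0 δ) (fun t => TupOn H U u t x)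

end

section Helpers

open Set Metric Filter
open scoped RealInnerProductSpace

variable {n : ℕ}

lemma lag_ge (H : Euc n → ℝ) (q p : Euc n) :
    ((⟪p, q⟫ - H p : ℝ) : EReal) ≤ Lag H q := le_iSup (fun p : Euc n => ((⟪p, q⟫ - H p : ℝ) : EReal)) p

lemma lag_nonneg (H : Euc n → ℝ) (hH0 : H 0 = 0) (q : Euc n) :
    (0 : EReal) ≤ Lag H q := by
  have h := lag_ge H q 0
  simpa [hH0] using h

lemma lag_real {H : Euc n → ℝ} (hH0 : H 0 = 0) {t a r : ℝ} (ht : 0 < t) {q : Euc n}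
    (heq : (r : EReal) = (a : EReal) - (t : EReal) * Lag H q) :
    ∃ ℓ : ℝ, 0 ≤ ℓ ∧ Lag H q = (ℓ : EReal) ∧ r = a - t * ℓ := by
  have hnb : Lag H q ≠ ⊥ := ne_of_gt (lt_of_lt_of_le (by simp) (lag_nonneg H hH0 q))
  have hnt : Lag H q ≠ ⊤ := by
    intro htop
    rw [htop] at heq
    rw [EReal.mul_top_of_pos (by exact_mod_cast ht), EReal.sub_top] at heq
    exact (EReal.coe_ne_bot r) heq
  refine ⟨(Lag H q).toReal, ?_, (EReal.coe_toReal hnt hnb).symm, ?_⟩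
  · have h := lag_nonneg H hH0 q
    rw [← EReal.coe_toReal hnt hnb] at h
    exact_mod_cast h
  · rw [← EReal.coe_toReal hnt hnb, ← EReal.coe_mul, ← EReal.coe_sub] at heq
    exact_mod_cast heq

lemma lag_comb {H : Euc n → ℝ} {t s : ℝ} (ht : 0 < t) (hs : 0 < s)
    (w1 w2 : Euc n) {ℓ m : ℝ}
    (h1 : Lag H w1 ≤ (ℓ : EReal)) (h2 : Lag H w2 ≤ (m : EReal)) :
    Lag H ((t + s)⁻¹ • (t • w1 + s • w2)) ≤ (((t * ℓ + s * m) / (t + s) : ℝ) : EReal) := by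
  refine iSup_le fun p => ?_
  rw [EReal.coe_le_coe_iff]
  have ha : ⟪p, w1⟫ - H p ≤ ℓ := by
    have := (lag_ge H w1 p).trans h1; exact_mod_cast this
  have hb : ⟪p, w2⟫ - H p ≤ m := by
    have := (lag_ge H w2 p).trans h2; exact_mod_cast this
  have hts : 0 < t + s := by linarith
  have hin : ⟪p, (t + s)⁻¹ • (t • w1 + s • w2)⟫
      = (t + s)⁻¹ * (t * ⟪p, w1⟫ + s * ⟪p, w2⟫) := by
    rw [real_inner_smul_right, inner_add_right, real_inner_smul_right, real_inner_smul_right]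
  rw [hin, div_eq_inv_mul]
  have key : t * ⟪p, w1⟫ + s * ⟪p, w2⟫ - (t + s) * H p ≤ t * ℓ + s * m := by nlinarith
  have h2' : (t + s)⁻¹ * (t * ⟪p, w1⟫ + s * ⟪p, w2⟫ - (t + s) * H p)
      ≤ (t + s)⁻¹ * (t * ℓ + s * m) :=
    mul_le_mul_of_nonneg_left key (by positivity)
  calc (t + s)⁻¹ * (t * ⟪p, w1⟫ + s * ⟪p, w2⟫) - H p
      = (t + s)⁻¹ * (t * ⟪p, w1⟫ + s * ⟪p, w2⟫ - (t + s) * H p) := by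
        field_simp
    _ ≤ (t + s)⁻¹ * (t * ℓ + s * m) := h2'

end Helpers

section Helpers2

open Set Metric Filter
open scoped RealInnerProductSpace

variable {n : ℕ}

/-- The defining set of `TupOn` for `t ≠ 0`. -/
def TupSet (H : Euc n → ℝ) (S : Set (Euc n)) (u : Euc n → ℝ) (t : ℝ) (x : Euc n) : Set ℝ :=
  {r : ℝ | ∃ y ∈ S, (r : EReal) = (u y : EReal) - (t : EReal) * Lag H (t⁻¹ • (y - x))}

lemma tupOn_of_ne {H : Euc n → ℝ} {S : Set (Euc n)} {u : Euc n → ℝ} {t : ℝ} (ht : t ≠ 0)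
    (x : Euc n) : TupOn H S u t x = sSup (TupSet H S u t x) := by
  rw [TupOn, if_neg ht]; rfl

lemma lag_zero {H : Euc n → ℝ} (hH0 : H 0 = 0) (hHnonneg : ∀ p, 0 ≤ H p) :
    Lag H (0 : Euc n) = 0 := by
  refine le_antisymm (iSup_le fun p => ?_) (lag_nonneg H hH0 0)
  have : (⟪p, (0 : Euc n)⟫ - H p : ℝ) ≤ 0 := by
    have := hHnonneg p
    simp only [inner_zero_right]
    linarith
  exact_mod_cast this

lemma tupSet_nonempty {H : Euc n → ℝ} {S : Set (Euc n)} {u : Euc n → ℝ} {t : ℝ}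
    (hH0 : H 0 = 0) (hHnonneg : ∀ p, 0 ≤ H p) {x : Euc n} (hx : x ∈ S) :
    u x ∈ TupSet H S u t x := by
  refine ⟨x, hx, ?_⟩
  rw [sub_self, smul_zero, lag_zero hH0 hHnonneg]
  simp

lemma tupSet_bddAbove {H : Euc n → ℝ} {S : Set (Euc n)} {u : Euc n → ℝ} {t : ℝ}
    (hH0 : H 0 = 0) (ht : 0 < t) {M : ℝ} (hM : ∀ z ∈ S, u z ≤ M) (x : Euc n) :
    TupSet H S u t x ⊆ Iic M := by
  rintro r ⟨z, hz, hr⟩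
  obtain ⟨ℓ, hℓ0, -, hrℓ⟩ := lag_real hH0 ht hr
  have : r ≤ u z := by rw [hrℓ]; nlinarith
  exact this.trans (hM z hz)

end Helpers2

section Helpers4

open Set Metric Filter
open scoped RealInnerProductSpace

variable {n : ℕ}

lemma tup_upper {H : Euc n → ℝ} (hHconv : ConvexOn ℝ Set.univ H)
    (hH0 : H 0 = 0) (hHnonneg : ∀ p, 0 ≤ H p)
    {U : Set (Euc n)} {u : Euc n → ℝ} (hu : LocLipOn u U)
    (hub : Bornology.IsBounded (u '' U)) {y : Euc n} (hy : y ∈ U) :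
    ∃ C : ℝ, 0 ≤ C ∧ ∀ s : ℝ, 0 < s → TupOn H U u s y ≤ u y + s * C := by
  obtain ⟨M, hM⟩ := hub.bddAbove
  obtain ⟨m, hm⟩ := hub.bddBelow
  have hMz : ∀ z ∈ U, u z ≤ M := fun z hz => hM (mem_image_of_mem u hz)
  have hmz : ∀ z ∈ U, m ≤ u z := fun z hz => hm (mem_image_of_mem u hz)
  have hmM : m ≤ M := le_trans (hmz y hy) (hMz y hy)
  obtain ⟨K, s', hs', hlip⟩ := hu y hy
  have hys' : y ∈ s' := mem_of_mem_nhdsWithin hy hs'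
  obtain ⟨v, hvopen, hyv, hvs⟩ := mem_nhdsWithin.1 hs'
  obtain ⟨ρ, hρ0, hρv⟩ := Metric.isOpen_iff.1 hvopen y hyv
  set R : ℝ := max (K : ℝ) ((M - m) / ρ) with hR
  have hR0 : 0 ≤ R := le_trans K.2 (le_max_left _ _)
  have hRK : (K : ℝ) ≤ R := le_max_left _ _
  have hRρ : M - m ≤ R * ρ := by
    have : (M - m) / ρ ≤ R := le_max_right _ _
    calc M - m = ((M - m) / ρ) * ρ := by field_simp
      _ ≤ R * ρ := by nlinarith
  have hcont : Continuous H := by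
    have := ConvexOn.continuousOn isOpen_univ hHconv
    exact continuousOn_univ.1 this
  have hbddH : BddAbove (H '' closedBall (0 : Euc n) R) :=
    (isCompact_closedBall 0 R).bddAbove_image hcont.continuousOn
  set C : ℝ := sSup (H '' closedBall (0 : Euc n) R) with hCdef
  have hHle : ∀ p : Euc n, ‖p‖ ≤ R → H p ≤ C := by
    intro p hp
    exact le_csSup hbddH (mem_image_of_mem H (by simpa [mem_closedBall, dist_eq_norm] using hp))
  have hC0 : 0 ≤ C := by
    have := hHle 0 (by simpa using hR0)
    rw [hH0] at this
    exact this
  refine ⟨C, hC0, fun s hs => ?_⟩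
  rw [tupOn_of_ne hs.ne' y]
  refine csSup_le ⟨u y, tupSet_nonempty hH0 hHnonneg hy⟩ ?_
  rintro r ⟨z, hz, hr⟩
  obtain ⟨mz, hmz0, hLagz, hrz⟩ := lag_real hH0 hs hr
  rcases eq_or_ne z y with rfl | hzy
  · rw [hrz]; nlinarith
  · have hnz : (0 : ℝ) < ‖z - y‖ := by
      rw [norm_pos_iff, sub_ne_zero]; exact hzy
    set p : Euc n := (R / ‖z - y‖) • (z - y) with hp
    have hpnorm : ‖p‖ ≤ R := by
      rw [hp, norm_smul, Real.norm_eq_abs, abs_div, abs_of_nonneg hR0,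
        abs_of_nonneg hnz.le, div_mul_cancel₀ _ hnz.ne']
    have hinner : ⟪p, s⁻¹ • (z - y)⟫ = s⁻¹ * (R * ‖z - y‖) := by
      rw [real_inner_smul_right, hp, real_inner_smul_left, real_inner_self_eq_norm_sq]
      field_simp
    have hlag := lag_ge H (s⁻¹ • (z - y)) p
    rw [hLagz] at hlag
    have hlag' : ⟪p, s⁻¹ • (z - y)⟫ - H p ≤ mz := by exact_mod_cast hlag
    have hmzge : s⁻¹ * (R * ‖z - y‖) - C ≤ mz := by
      have := hHle p hpnorm
      rw [hinner] at hlag'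
      linarith
    have hru : r ≤ u z - R * ‖z - y‖ + s * C := by
      rw [hrz]
      have h1 : s * (s⁻¹ * (R * ‖z - y‖) - C) ≤ s * mz :=
        mul_le_mul_of_nonneg_left hmzge hs.le
      have h2 : s * (s⁻¹ * (R * ‖z - y‖) - C) = R * ‖z - y‖ - s * C := by
        field_simp
      linarith
    rcases lt_or_ge (dist z y) ρ with hcase | hcase
    · have hzs' : z ∈ s' := hvs ⟨hρv hcase, hz⟩
      have hdist := hlip.dist_le_mul z hzs' y hys'
      have huz : u z ≤ u y + (K : ℝ) * ‖z - y‖ := by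
        rw [Real.dist_eq] at hdist
        have := le_abs_self (u z - u y)
        rw [dist_eq_norm] at hdist
        linarith
      nlinarith
    · have huz : u z ≤ M := hMz z hz
      have hdz : ρ ≤ ‖z - y‖ := by rwa [dist_eq_norm] at hcase
      have : R * ρ ≤ R * ‖z - y‖ := mul_le_mul_of_nonneg_left hdz hR0
      have hmy : m ≤ u y := hmz y hy
      nlinarith
end Helpers4
set_option maxHeartbeats 1000000

/-- The increasing slope estimate. -/
theorem increasing_slope_estimate {n : ℕ} (hn : 1 ≤ n) (H : Euc n → ℝ)
    (hHconv : ConvexOn ℝ Set.univ H) (hH0 : H 0 = 0) (hHnonneg : ∀ p, 0 ≤ H p)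
    (hHzb : Bornology.IsBounded {p : Euc n | H p = 0})
    (hHzi : interior {p : Euc n | H p = 0} = ∅)
    (U : Set (Euc n)) (hU : IsOpen U) (u : Euc n → ℝ)
    (hu : LocLipOn u U) (hub : Bornology.IsBounded (u '' U))
    (hpcc : PtwiseCC H U u)
    (x y : Euc n) (hx : x ∈ U) (hy : y ∈ U) (t δ : ℝ) (ht : 0 < t) (hδ : 0 < δ)
    (hconv : ConvexOn ℝ (Icc 0 δ) (fun s => TupOn H U u s x)) (htδ : t < δ)
    (heq : ((TupOn H U u t x : ℝ) : EReal) =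
      (u y : EReal) - (t : EReal) * Lag H (t⁻¹ • (y - x))) :
    (TupOn H U u t x - u x) / t ≤ Splus H U u y := by
  classical
  obtain ⟨M, hM⟩ := hub.bddAbove
  have hMz : ∀ z ∈ U, u z ≤ M := fun z hz => hM (Set.mem_image_of_mem u hz)
  set q : Euc n := t⁻¹ • (y - x) with hq
  obtain ⟨ℓ, hℓ0, hLag, hTt⟩ := lag_real hH0 ht heq
  set c : ℝ := (TupOn H U u t x - u x) / t with hc
  have hct : c * t = TupOn H U u t x - u x := by
    rw [hc]; field_simp
  set Y : ℝ → Euc n := fun a => y - a • q with hYdef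
  have hYcont : Continuous Y := by
    exact continuous_const.sub (continuous_id.smul continuous_const)
  have hQ1 : (0:ℝ) < ‖q‖ + 1 := by positivity
  obtain ⟨r, hr0, hrU⟩ := Metric.isOpen_iff.1 hU y hy
  set s₀ : ℝ := min (r / (2 * (‖q‖ + 1))) (t / 2) with hs₀def
  have hs₀pos : 0 < s₀ := lt_min (by positivity) (by linarith)
  have hs₀t : s₀ < t := lt_of_le_of_lt (min_le_right _ _) (by linarith)
  have hYdist : ∀ a : ℝ, 0 ≤ a → dist (Y a) y = a * ‖q‖ := by
    intro a ha
    rw [hYdef]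
    simp only [dist_eq_norm]
    rw [sub_sub_cancel_left, norm_neg, norm_smul, Real.norm_eq_abs, abs_of_nonneg ha]
  have hYU : ∀ a ∈ Icc (0:ℝ) s₀, Y a ∈ U := by
    intro a ha
    refine hrU ?_
    rw [mem_ball, hYdist a ha.1]
    have h1 : a * ‖q‖ ≤ s₀ * ‖q‖ := mul_le_mul_of_nonneg_right ha.2 (norm_nonneg _)
    have h2 : s₀ ≤ r / (2 * (‖q‖ + 1)) := min_le_left _ _
    have h3 : s₀ * ‖q‖ ≤ (r / (2 * (‖q‖ + 1))) * (‖q‖ + 1) :=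
      mul_le_mul h2 (by linarith) (norm_nonneg _) (by positivity)
    have h4 : (r / (2 * (‖q‖ + 1))) * (‖q‖ + 1) = r / 2 := by
      field_simp
    linarith
  have hY0 : Y 0 = y := by rw [hYdef]; simp
  have htq : t • q = y - x := by
    rw [hq, smul_inv_smul₀ ht.ne']
  -- u is continuous on U
  have hucont : ContinuousOn u U := by
    intro z hz
    obtain ⟨K, s', hs', hlip⟩ := hu z hz
    have hzs' : z ∈ s' := mem_of_mem_nhdsWithin hz hs'
    have h1 : ContinuousWithinAt u s' z := (hlip.continuousOn).continuousWithinAt hzs'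
    exact h1.mono_of_mem_nhdsWithin hs'
  -- Step 2: u (Y a) ≤ u y - a * (c + ℓ)
  have hstep2 : ∀ a ∈ Ioc (0:ℝ) s₀, u (Y a) ≤ u y - a * (c + ℓ) := by
    intro a ha
    have hta : 0 < t - a := by linarith [ha.2, hs₀t]
    have hYaU : Y a ∈ U := hYU a ⟨ha.1.le, ha.2⟩
    have hYax : Y a - x = (t - a) • q := by
      rw [hYdef]
      simp only [sub_smul]
      rw [htq]
      abel
    have hmem : u (Y a) - (t - a) * ℓ ∈ TupSet H U u (t - a) x := by
      refine ⟨Y a, hYaU, ?_⟩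
      rw [hYax, inv_smul_smul₀ hta.ne', hLag, ← EReal.coe_mul, ← EReal.coe_sub]
    have h1 : u (Y a) - (t - a) * ℓ ≤ TupOn H U u (t - a) x := by
      rw [tupOn_of_ne hta.ne' x]
      exact le_csSup ⟨M, fun r hr => tupSet_bddAbove hH0 hta hMz x hr⟩ hmem
    have hsl := hconv.slope_mono_adjacent (x := 0) (y := t - a) (z := t)
      ⟨le_refl 0, hδ.le⟩ ⟨by linarith, htδ.le⟩ (by linarith) (by linarith [ha.1])
    simp only [sub_zero] at hsl
    have hT0 : TupOn H U u 0 x = u x := by rw [TupOn, if_pos rfl]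
    rw [hT0] at hsl
    rw [div_le_div_iff₀ hta (by linarith [ha.1] : (0:ℝ) < t - (t - a))] at hsl
    -- hsl : (TupOn (t-a) x - u x) * (t - (t-a)) ≤ (TupOn t x - TupOn (t-a) x) * (t-a)
    have hca : c * a ≤ TupOn H U u t x - TupOn H U u (t - a) x := by
      nlinarith [hct, ha.1]
    rw [hTt] at hca
    linarith [h1, hca]
  -- Step 3: competitor along the segment for small scales
  have hstep3 : ∀ a ∈ Ioc (0:ℝ) s₀, ∀ σ ∈ Ioc (0:ℝ) a,
      u (Y (a - σ)) - σ * ℓ ≤ TupOn H U u σ (Y a) := by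
    intro a ha σ hσ
    have hYaU : Y a ∈ U := hYU a ⟨ha.1.le, ha.2⟩
    have hYasU : Y (a - σ) ∈ U := hYU (a - σ) ⟨by linarith [hσ.2], by linarith [ha.2, hσ.1]⟩
    have hdiff : Y (a - σ) - Y a = σ • q := by
      rw [hYdef]
      simp only [sub_smul]
      abel
    have hmem : u (Y (a - σ)) - σ * ℓ ∈ TupSet H U u σ (Y a) := by
      refine ⟨Y (a - σ), hYasU, ?_⟩
      rw [hdiff, inv_smul_smul₀ hσ.1.ne', hLag, ← EReal.coe_mul, ← EReal.coe_sub]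
    rw [tupOn_of_ne hσ.1.ne' (Y a)]
    exact le_csSup ⟨M, fun r hr => tupSet_bddAbove hH0 hσ.1 hMz (Y a) hr⟩ hmem
  -- Main: for every ε > 0, c ≤ Splus + ε
  show c ≤ Splus H U u y
  refine le_of_forall_pos_le_add fun ε hε => ?_
  -- USC neighborhood
  have husc := hpcc.1 y hy (Splus H U u y + ε / 2) (by linarith)
  obtain ⟨v, hvopen, hyv, hvsub⟩ := mem_nhdsWithin.1 husc
  obtain ⟨r₂, hr₂0, hr₂v⟩ := Metric.isOpen_iff.1 hvopen y hyv
  set s₁ : ℝ := min s₀ (r₂ / (2 * (‖q‖ + 1))) with hs₁def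
  have hs₁0 : 0 < s₁ := lt_min hs₀pos (by positivity)
  have hs₁s₀ : s₁ ≤ s₀ := min_le_left _ _
  -- Step 5': find a with frequently large left difference quotients
  obtain ⟨a, ha, hfreq⟩ : ∃ a ∈ Ioc (0:ℝ) s₁,
      ∃ᶠ σ in nhdsWithin 0 (Ioi 0),
        c + ℓ - ε / 2 ≤ (u (Y (a - σ)) - u (Y a)) / σ := by
    by_contra hcon
    push_neg at hcon
    set κ : ℝ := c + ℓ - ε / 2 with hκ
    set ψ : ℝ → ℝ := fun b => u (Y b) + κ * b with hψ
    have hψcont : ContinuousOn ψ (Icc 0 s₁) := by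
      refine ContinuousOn.add ?_ (continuous_const.mul continuous_id).continuousOn
      refine hucont.comp hYcont.continuousOn ?_
      intro b hb
      exact hYU b ⟨hb.1, hb.2.trans hs₁s₀⟩
    obtain ⟨a', ha'mem, ha'min⟩ := isCompact_Icc.exists_isMinOn
      (nonempty_Icc.2 hs₁0.le) hψcont
    rcases eq_or_lt_of_le ha'mem.1 with h0 | h0
    · -- a' = 0 : minimum at 0 gives ψ 0 ≤ ψ s₁, contradiction with step 2
      have hmin := ha'min (show s₁ ∈ Icc (0:ℝ) s₁ from ⟨hs₁0.le, le_refl _⟩)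
      rw [← h0] at hmin
      simp only [hψ, Set.mem_setOf_eq] at hmin
      rw [hY0] at hmin
      have hmin' : u y + κ * 0 ≤ u (Y s₁) + κ * s₁ := hmin
      have h2 := hstep2 s₁ ⟨hs₁0, hs₁s₀⟩
      rw [hκ] at hmin'
      linarith [hmin', h2, mul_pos hε hs₁0]
    · -- 0 < a' : contradiction with local decrease on the left
      have hcon' := hcon a' ⟨h0, ha'mem.2⟩
      have hcon'' : {σ : ℝ | ¬ c + ℓ - ε / 2 ≤ (u (Y (a' - σ)) - u (Y a')) / σ}
          ∈ nhdsWithin 0 (Ioi 0) := hcon'.mono fun σ hσ => not_le.2 hσ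
      obtain ⟨σ₀, hσ₀, hsub⟩ := mem_nhdsGT_iff_exists_Ioo_subset.1 hcon''
      have hσ₀0 : (0:ℝ) < σ₀ := hσ₀
      set σ : ℝ := min σ₀ a' / 2 with hσdef
      have hσpos : 0 < σ := by
        have : 0 < min σ₀ a' := lt_min hσ₀0 h0
        positivity
      have hσlt₀ : σ < σ₀ := by
        have h1 : min σ₀ a' ≤ σ₀ := min_le_left _ _
        rw [hσdef]; linarith
      have hσlta : σ < a' := by
        have h1 : min σ₀ a' ≤ a' := min_le_right _ _
        rw [hσdef]; linarith
      have hmem' : σ ∈ Ioo (0:ℝ) σ₀ := ⟨hσpos, hσlt₀⟩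
      have hlt := hsub hmem'
      rw [Set.mem_setOf_eq, not_le, div_lt_iff₀ hσpos] at hlt
      -- hlt : u (Y (a' - σ)) - u (Y a') < (c + ℓ - ε/2) * σ
      have hmin2 := ha'min (show a' - σ ∈ Icc (0:ℝ) s₁ from
        ⟨by linarith, by linarith [ha'mem.2]⟩)
      simp only [hψ, hκ, Set.mem_setOf_eq] at hmin2
      have hmin2' : u (Y a') + (c + ℓ - ε / 2) * a' ≤
          u (Y (a' - σ)) + (c + ℓ - ε / 2) * (a' - σ) := hmin2
      linarith [hlt, hmin2']
  -- Now S⁺ at Y a is at least c - ε/2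
  have haIoc : a ∈ Ioc (0:ℝ) s₀ := ⟨ha.1, ha.2.trans hs₁s₀⟩
  have hYaU : Y a ∈ U := hYU a ⟨ha.1.le, haIoc.2⟩
  obtain ⟨C, hC0, hCb⟩ := tup_upper hHconv hH0 hHnonneg hu hub hYaU
  have hSa : c - ε / 2 ≤ Splus H U u (Y a) := by
    simp only [Splus]
    refine Filter.le_limsup_of_frequently_le ?_ ⟨C, Filter.eventually_map.2 ?_⟩
    · have hev : ∀ᶠ σ in nhdsWithin 0 (Ioi 0), σ ∈ Ioo (0:ℝ) a :=
        Filter.eventually_of_mem (Ioo_mem_nhdsGT_of_mem ⟨le_refl 0, ha.1⟩) fun σ hσ => hσ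
      refine (hfreq.and_eventually hev).mono ?_
      rintro σ ⟨h1, h2⟩
      have h3 := hstep3 a haIoc σ ⟨h2.1, h2.2.le⟩
      have hσ0 : (0:ℝ) < σ := h2.1
      rw [le_div_iff₀ hσ0] at h1
      rw [le_div_iff₀ hσ0]
      nlinarith [h1, h3]
    · refine Filter.eventually_of_mem self_mem_nhdsWithin fun σ hσ => ?_
      have hσ0 : (0:ℝ) < σ := hσ
      show (TupOn H U u σ (Y a) - u (Y a)) / σ ≤ C
      rw [div_le_iff₀ hσ0]
      have := hCb σ hσ0
      nlinarith [this]
  -- USC conclusion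
  have hmemv : Y a ∈ v ∩ U := by
    refine ⟨hr₂v ?_, hYaU⟩
    rw [mem_ball, hYdist a ha.1.le]
    have h2 : a ≤ r₂ / (2 * (‖q‖ + 1)) := ha.2.trans (min_le_right _ _)
    have h3 : a * ‖q‖ ≤ (r₂ / (2 * (‖q‖ + 1))) * (‖q‖ + 1) :=
      mul_le_mul h2 (by linarith) (norm_nonneg _) (by positivity)
    have h4 : (r₂ / (2 * (‖q‖ + 1))) * (‖q‖ + 1) = r₂ / 2 := by
      field_simp
    linarith
  have hfin : Splus H U u (Y a) < Splus H U u y + ε / 2 := hvsub hmemv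
  linarith
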